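/- arXiv:0709.3328 — 4 statements merged into one kernel-verified Lean document; each statement's English description precedes it below -/
import Mathlib

section
/- Let a, b, c > 0 satisfy b·c^(1/2) < (a/2)^(3/2). If φ is a nonnegative absolutely continuous function on [t₀, ∞) with φ(t₀) = 0 satisfying φ'(t) ≤ -a·φ(t) + b·φ(t)^(3/2) + c for almost every t ≥ t₀, then φ(t) ≤ 2c/a for all t ≥ t₀. -/
open MeasureTheory Set

theorem stmt_0 (a b c t₀ : ℝ) (ha : 0 < a) (hb : 0 < b) (hc : 0 < c)
    (ht₀ : 0 ≤ t₀)
    (hcond : b * Real.sqrt c < (a / 2) ^ ((3:ℝ)/2))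
    (φ φ' : ℝ → ℝ)
    (hnonneg : ∀ t, t₀ ≤ t → 0 ≤ φ t)
    (hderiv : ∀ t, t₀ ≤ t → HasDerivAt φ (φ' t) t)
    (hineq : ∀ᵐ t ∂volume, t₀ ≤ t → φ' t ≤ -a * φ t + b * φ t ^ ((3:ℝ)/2) + c)
    (hinit : φ t₀ = 0) :
    ∀ t, t₀ ≤ t → φ t ≤ 2 * c / a := by
  intro t ht
  by_contra hgt
  push_neg at hgt
  set M : ℝ := 2 * c / a with hM
  have hM0 : 0 < M := by positivity
  -- key numeric inequality : b * M ^ (3/2) < c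
  have hkey : b * M ^ ((3:ℝ)/2) < c := by
    have h1 : M = (2 / a) * c := by rw [hM]; ring
    have h2 : M ^ ((3:ℝ)/2) = (2/a) ^ ((3:ℝ)/2) * c ^ ((3:ℝ)/2) := by
      rw [h1, Real.mul_rpow (by positivity) hc.le]
    have h3 : c ^ ((3:ℝ)/2) = c * Real.sqrt c := by
      have h5 : ((3:ℝ)/2) = 1 + 1/2 := by norm_num
      rw [h5, Real.rpow_add hc, Real.rpow_one, Real.sqrt_eq_rpow]
    have h4 : (2/a) ^ ((3:ℝ)/2) * (a/2) ^ ((3:ℝ)/2) = 1 := by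
      rw [← Real.mul_rpow (by positivity) (by positivity)]
      have h6 : (2/a) * (a/2) = 1 := by field_simp
      rw [h6, Real.one_rpow]
    have hP : (0:ℝ) < (2/a) ^ ((3:ℝ)/2) := by positivity
    have hsc : (0:ℝ) < Real.sqrt c := Real.sqrt_pos.mpr hc
    rw [h2, h3]
    nlinarith [mul_lt_mul_of_pos_right hcond (mul_pos hP hc)]
  -- the scalar function h
  set h : ℝ → ℝ := fun x => -a * x + b * x ^ ((3:ℝ)/2) + c with hh
  have hhM : h M < 0 := by
    have h5 : -a * M = -(2*c) := by rw [hM]; field_simp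
    show -a * M + b * M ^ ((3:ℝ)/2) + c < 0
    rw [h5]; linarith
  have hconth : ContinuousAt h M := by
    have h1 : ContinuousAt (fun x : ℝ => x ^ ((3:ℝ)/2)) M :=
      Real.continuousAt_rpow_const M _ (Or.inl hM0.ne')
    exact ((continuousAt_const.mul continuousAt_id).add
      (continuousAt_const.mul h1)).add continuousAt_const
  obtain ⟨δ, hδ0, hδ⟩ : ∃ δ > 0, ∀ x : ℝ, dist x M < δ → h x < 0 := by
    have hev : ∀ᶠ x in nhds M, h x < 0 := hconth.eventually (Iio_mem_nhds hhM)
    rcases Metric.eventually_nhds_iff.1 hev with ⟨δ, hδ0, hδ'⟩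
    exact ⟨δ, hδ0, fun x hx => hδ' hx⟩
  set ε : ℝ := min (δ/2) ((φ t - M)/2) with hε
  have hε0 : 0 < ε := lt_min (by linarith) (by linarith)
  have hMεt : M + ε < φ t := by
    have h1 : ε ≤ (φ t - M)/2 := min_le_right _ _
    linarith
  have hsmall : ∀ x : ℝ, M ≤ x → x ≤ M + ε → h x < 0 := by
    intro x h1 h2
    apply hδ
    rw [Real.dist_eq, abs_of_nonneg (by linarith)]
    have h3 : ε ≤ δ/2 := min_le_left _ _
    linarith
  -- continuity of φ on [t₀, ∞)
  have hφcont : ContinuousOn φ (Ici t₀) := fun r hr =>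
    ((hderiv r hr).continuousAt).continuousWithinAt
  have ht₀t : t₀ < t := by
    rcases eq_or_lt_of_le ht with rfl | hlt
    · rw [hinit] at hgt; linarith
    · exact hlt
  -- first time u where φ = M + ε
  set A : Set ℝ := Icc t₀ t ∩ φ ⁻¹' {M + ε} with hA
  have hAcl : IsClosed A :=
    (hφcont.mono Icc_subset_Ici_self).preimage_isClosed_of_isClosed isClosed_Icc
      isClosed_singleton
  have hAbdd : BddBelow A := ⟨t₀, fun x hx => hx.1.1⟩
  have hAne : A.Nonempty := by
    have hsub := intermediate_value_Icc ht₀t.le (hφcont.mono Icc_subset_Ici_self)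
    have hmem : M + ε ∈ Icc (φ t₀) (φ t) := by
      rw [hinit]; exact ⟨by linarith, hMεt.le⟩
    rcases hsub hmem with ⟨r, hr, hφr⟩
    exact ⟨r, hr, hφr⟩
  set u := sInf A with hu
  have huA : u ∈ A := hAcl.csInf_mem hAne hAbdd
  have hφu : φ u = M + ε := huA.2
  have ht₀u : t₀ ≤ u := huA.1.1
  have hut : u ≤ t := huA.1.2
  have hbefore : ∀ r, t₀ ≤ r → r < u → φ r < M + ε := by
    intro r h1 h2
    by_contra hge
    push_neg at hge
    have hsub := intermediate_value_Icc h1 (hφcont.mono Icc_subset_Ici_self)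
    have hmem : M + ε ∈ Icc (φ t₀) (φ r) := by rw [hinit]; exact ⟨by linarith, hge⟩
    rcases hsub hmem with ⟨r', hr', hφr'⟩
    have h3 : u ≤ r' :=
      csInf_le hAbdd ⟨⟨hr'.1, le_trans hr'.2 (le_trans h2.le hut)⟩, hφr'⟩
    linarith [hr'.2]
  -- last time s before u where φ = M
  set B : Set ℝ := Icc t₀ u ∩ φ ⁻¹' {M} with hB
  have hBcl : IsClosed B :=
    (hφcont.mono Icc_subset_Ici_self).preimage_isClosed_of_isClosed isClosed_Icc
      isClosed_singleton
  have hBbdd : BddAbove B := ⟨u, fun x hx => hx.1.2⟩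
  have hBne : B.Nonempty := by
    have hsub := intermediate_value_Icc ht₀u (hφcont.mono Icc_subset_Ici_self)
    have hmem : M ∈ Icc (φ t₀) (φ u) := by
      rw [hinit, hφu]; exact ⟨hM0.le, by linarith⟩
    rcases hsub hmem with ⟨r, hr, hφr⟩
    exact ⟨r, hr, hφr⟩
  set s := sSup B with hs
  have hsB : s ∈ B := hBcl.csSup_mem hBne hBbdd
  have hφs : φ s = M := hsB.2
  have ht₀s : t₀ ≤ s := hsB.1.1
  have hsu : s ≤ u := hsB.1.2
  have hafter : ∀ r, s < r → r ≤ u → M ≤ φ r := by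
    intro r h1 h2
    by_contra hlt
    push_neg at hlt
    have hsub := intermediate_value_Icc h2
      (hφcont.mono (fun x hx => le_trans ht₀s (le_trans h1.le hx.1)))
    have hmem : M ∈ Icc (φ r) (φ u) := by rw [hφu]; exact ⟨hlt.le, by linarith⟩
    rcases hsub hmem with ⟨r', hr', hφr'⟩
    have hr'B : r' ∈ B := ⟨⟨le_trans ht₀s (le_trans h1.le hr'.1), hr'.2⟩, hφr'⟩
    have h3 : r' ≤ s := le_csSup hBbdd hr'B
    linarith [hr'.1]
  -- bounds for φ on [s,u]
  have hbound : ∀ r ∈ Icc s u, M ≤ φ r ∧ φ r ≤ M + ε := by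
    intro r hr
    constructor
    · rcases eq_or_lt_of_le hr.1 with heq | hlt
      · rw [← heq, hφs]
      · exact hafter r hlt hr.2
    · rcases eq_or_lt_of_le hr.2 with heq | hlt
      · rw [heq, hφu]
      · exact (hbefore r (le_trans ht₀s hr.1) hlt).le
  set F : ℝ → ℝ := fun r => -a * φ r + b * φ r ^ ((3:ℝ)/2) + c with hF
  have hFneg : ∀ r ∈ Icc s u, F r ≤ 0 := fun r hr =>
    (hsmall (φ r) (hbound r hr).1 (hbound r hr).2).le
  have hφcontsu : ContinuousOn φ (Icc s u) :=
    hφcont.mono (fun x hx => le_trans ht₀s hx.1)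
  have hFcont : ContinuousOn F (Icc s u) := by
    intro r hr
    have h1 : ContinuousWithinAt φ (Icc s u) r := hφcontsu r hr
    have hne : φ r ≠ 0 := by have := (hbound r hr).1; intro h0; rw [h0] at this; linarith
    have h2 : ContinuousWithinAt (fun x => φ x ^ ((3:ℝ)/2)) (Icc s u) r :=
      h1.rpow_const (Or.inl hne)
    exact ((continuousWithinAt_const.mul h1).add
      (continuousWithinAt_const.mul h2)).add continuousWithinAt_const
  have hFint : IntegrableOn F (Icc s u) volume := hFcont.integrableOn_Icc
  set G : ℝ → ℝ := fun r => max (φ' r) (F r) with hG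
  have hGF : ∀ᵐ r ∂volume, r ∈ Set.uIoc s u → G r = F r := by
    filter_upwards [hineq] with r hr hmem
    rw [uIoc_of_le hsu] at hmem
    exact max_eq_right (hr (le_trans ht₀s hmem.1.le))
  have hGint : IntegrableOn G (Icc s u) volume := by
    have h1 : ∀ᵐ r ∂(volume.restrict (Icc s u)), t₀ ≤ r → φ' r ≤ F r :=
      ae_restrict_of_ae hineq
    have h2 : ∀ᵐ r ∂(volume.restrict (Icc s u)), r ∈ Icc s u :=
      ae_restrict_mem measurableSet_Icc
    have heq : F =ᵐ[volume.restrict (Icc s u)] G := by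
      filter_upwards [h1, h2] with r hr1 hr2
      exact (max_eq_right (hr1 (le_trans ht₀s hr2.1))).symm
    exact hFint.congr heq
  have hmain := intervalIntegral.sub_le_integral_of_hasDeriv_right_of_le hsu hφcontsu
    (fun x hx => ((hderiv x (le_trans ht₀s hx.1.le)).hasDerivWithinAt)) hGint
    (fun x hx => le_max_left _ _)
  have hIeq : (∫ y in s..u, G y) = ∫ y in s..u, F y :=
    intervalIntegral.integral_congr_ae hGF
  have hInonpos : (∫ y in s..u, F y) ≤ 0 := by
    rw [intervalIntegral.integral_of_le hsu]
    exact setIntegral_nonpos measurableSet_Ioc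
      (fun x hx => hFneg x ⟨hx.1.le, hx.2⟩)
  rw [hφu, hφs, hIeq] at hmain
  linarith
end

section
/- Let a(t) and b(t) be locally integrable functions on (0,∞) and T > 0 such that liminf_{t→∞} (1/T)∫_t^{t+T} a(τ)dτ > 0, limsup_{t→∞} (1/T)∫_t^{t+T} max(-a(τ),0)dτ < ∞, and limsup_{t→∞} (1/T)∫_t^{t+T} max(b(τ),0)dτ = 0. If φ is a nonnegative absolutely continuous function on [0,∞) satisfying φ'(t) + a(t)φ(t) ≤ b(t) almost everywhere, then φ(t) → 0 as t → ∞. -/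
open MeasureTheory Filter Set intervalIntegral Topology

set_option maxHeartbeats 1600000

lemma gronwall_exp (a b φ φ' : ℝ → ℝ) (s t : ℝ) (hs : 0 < s) (hst : s ≤ t)
    (hai : IntegrableOn a (Icc s t)) (hbi : IntegrableOn b (Icc s t))
    (hnonneg : ∀ u, 0 ≤ u → 0 ≤ φ u)
    (hderiv : ∀ u, 0 ≤ u → HasDerivAt φ (φ' u) u)
    (hineq : ∀ᵐ u ∂volume, 0 ≤ u → φ' u + a u * φ u ≤ b u) :
    φ t * Real.exp (∫ τ in s..t, a τ) ≤
      φ s + ∫ u in s..t, max (b u) 0 * Real.exp (∫ τ in s..u, a τ) := by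
  have huIcc : uIcc s t = Icc s t := uIcc_of_le hst
  have haiI : IntervalIntegrable a volume s t := by
    rw [intervalIntegrable_iff_integrableOn_Icc_of_le hst]; exact hai
  set A : ℝ → ℝ := fun u => ∫ τ in s..u, a τ with hA
  have hAc : ContinuousOn A (Icc s t) := by
    have := intervalIntegral.continuousOn_primitive_interval (a := s) (b := t) (μ := volume)
      (f := a) (by rwa [huIcc])
    rwa [huIcc] at this
  have hexpAc : ContinuousOn (fun u => Real.exp (A u)) (Icc s t) :=
    Real.continuous_exp.comp_continuousOn hAc
  have hφc : ContinuousOn φ (Icc s t) := fun u hu =>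
    ((hderiv u (hs.le.trans hu.1)).continuousAt).continuousWithinAt
  set bp : ℝ → ℝ := fun u => max (b u) 0 with hbp
  have hbpi : IntegrableOn bp (Icc s t) := by
    refine Integrable.mono hbi ((hbi.aemeasurable.max aemeasurable_const).aestronglyMeasurable) ?_
    filter_upwards with u
    simp only [Real.norm_eq_abs, hbp]
    rw [abs_of_nonneg (le_max_right (b u) 0)]
    exact max_le (le_abs_self _) (abs_nonneg _)
  have hbpI : IntervalIntegrable bp volume s t := by
    rw [intervalIntegrable_iff_integrableOn_Icc_of_le hst]; exact hbpi
  have hS2I : IntervalIntegrable (fun u => bp u * Real.exp (A u)) volume s t :=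
    hbpI.mul_continuousOn (by rwa [huIcc])
  set S2 : ℝ := ∫ u in s..t, bp u * Real.exp (A u) with hS2
  -- bound for φ * exp A on the compact interval
  obtain ⟨M1, hM1⟩ := (isCompact_Icc (a := s) (b := t)).exists_bound_of_continuousOn
    (hφc.mul hexpAc)
  set M0 : ℝ := max M1 0 with hM0
  have hM0nn : 0 ≤ M0 := le_max_right _ _
  have hM0b : ∀ u ∈ Icc s t, φ u * Real.exp (A u) ≤ M0 := fun u hu =>
    ((le_abs_self _).trans ((Real.norm_eq_abs _ ▸ hM1 u hu))).trans (le_max_left _ _)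
  -- limit argument in ε
  have cont : Tendsto (fun ε : ℝ => Real.exp (2*ε) * (φ s + S2 + M0 * ε)) (𝓝[>] 0)
      (𝓝 (φ s + S2)) := by
    have hc : Continuous fun ε : ℝ => Real.exp (2*ε) * (φ s + S2 + M0 * ε) := by
      continuity
    have h2 : Tendsto (fun ε : ℝ => Real.exp (2*ε) * (φ s + S2 + M0 * ε)) (𝓝[>] (0:ℝ))
        (𝓝 (Real.exp (2*0) * (φ s + S2 + M0 * 0))) :=
      (hc.tendsto 0).mono_left nhdsWithin_le_nhds
    simpa using h2
  refine ge_of_tendsto cont ?_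
  filter_upwards [Ioc_mem_nhdsGT_of_mem (by simp : (0:ℝ) ∈ Ico (0:ℝ) 1)] with ε hε
  obtain ⟨hε0, hε1⟩ := hε
  -- approximate `a` in L¹ by a continuous function `c`
  have haId : Integrable ((Icc s t).indicator a) volume :=
    (integrable_indicator_iff measurableSet_Icc).2 hai
  obtain ⟨c, -, hc_close, hc_cont, hc_int⟩ :=
    haId.exists_hasCompactSupport_integral_sub_le hε0
  have hcI : ∀ u v : ℝ, IntervalIntegrable c volume u v := fun u v =>
    hc_cont.intervalIntegrable u v
  set C : ℝ → ℝ := fun u => ∫ τ in s..u, c τ with hC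
  have hCd : ∀ u, HasDerivAt C (c u) u := fun u =>
    intervalIntegral.integral_hasDerivAt_right (hcI s u)
      ⟨univ, univ_mem, hc_cont.aestronglyMeasurable.restrict⟩ hc_cont.continuousAt
  have hCc : Continuous C := by
    rw [continuous_iff_continuousAt]; exact fun u => (hCd u).continuousAt
  -- `C` is uniformly close to `A` on `[s, t]`
  have hclose : ∀ u ∈ Icc s t, |C u - A u| ≤ ε := by
    intro u hu
    have haiu : IntervalIntegrable a volume s u := by
      rw [intervalIntegrable_iff_integrableOn_Icc_of_le hu.1]
      exact hai.mono_set (Icc_subset_Icc_right hu.2)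
    have h1 : C u - A u = ∫ τ in s..u, (c τ - a τ) :=
      (intervalIntegral.integral_sub (hcI s u) haiu).symm
    have hca : IntegrableOn (fun τ => |c τ - a τ|) (Icc s t) :=
      ((hc_cont.integrableOn_Icc).sub hai).norm
    have h2 : |∫ τ in s..u, (c τ - a τ)| ≤ ∫ τ in s..u, |c τ - a τ| :=
      intervalIntegral.abs_integral_le_integral_abs hu.1
    have h3 : (∫ τ in s..u, |c τ - a τ|) ≤ ∫ τ in Icc s t, |c τ - a τ| := by
      rw [intervalIntegral.integral_of_le hu.1]
      refine setIntegral_mono_set hca ?_ ?_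
      · filter_upwards with x using abs_nonneg _
      · exact HasSubset.Subset.eventuallyLE (Ioc_subset_Icc_self.trans
          (Icc_subset_Icc_right hu.2))
    have h4 : (∫ τ in Icc s t, |c τ - a τ|)
        = ∫ τ in Icc s t, ‖(Icc s t).indicator a τ - c τ‖ := by
      refine setIntegral_congr_fun measurableSet_Icc fun x hx => ?_
      rw [indicator_of_mem hx, Real.norm_eq_abs, abs_sub_comm]
    have h5 : (∫ τ in Icc s t, ‖(Icc s t).indicator a τ - c τ‖)
        ≤ ∫ τ, ‖(Icc s t).indicator a τ - c τ‖ := by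
      refine setIntegral_le_integral (haId.sub hc_int).norm ?_
      filter_upwards with x using norm_nonneg _
    rw [h1]
    exact h2.trans (h3.trans ((h4.le.trans h5).trans hc_close))
  -- the auxiliary function ψ and its derivative
  set ψ : ℝ → ℝ := fun u => φ u * Real.exp (C u) with hψ
  set ψd : ℝ → ℝ := fun u => (φ' u + c u * φ u) * Real.exp (C u) with hψd
  have hψder : ∀ u, 0 ≤ u → HasDerivAt ψ (ψd u) u := by
    intro u hu0
    have : HasDerivAt (fun x => φ x * Real.exp (C x)) _ u := (hderiv u hu0).mul ((hCd u).exp)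
    convert this using 1
    show (φ' u + c u * φ u) * Real.exp (C u) = _; ring
  have hψcont : ContinuousOn ψ (Icc s t) :=
    hφc.mul (Real.continuous_exp.comp hCc).continuousOn
  -- the integrable majorant
  set h : ℝ → ℝ := fun u => bp u * Real.exp (C u) + |c u - a u| * (φ u * Real.exp (C u))
    with hh
  have hexpCc : ContinuousOn (fun u => Real.exp (C u)) (uIcc s t) :=
    (Real.continuous_exp.comp hCc).continuousOn
  have hφexpCc : ContinuousOn (fun u => φ u * Real.exp (C u)) (uIcc s t) := by
    rw [huIcc]; exact hφc.mul (Real.continuous_exp.comp hCc).continuousOn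
  have hcaI : IntervalIntegrable (fun τ => |c τ - a τ|) volume s t := by
    rw [intervalIntegrable_iff_integrableOn_Icc_of_le hst]
    exact ((hc_cont.integrableOn_Icc).sub hai).norm
  have hhI : IntervalIntegrable h volume s t := by
    refine IntervalIntegrable.add (hbpI.mul_continuousOn hexpCc) ?_
    exact hcaI.mul_continuousOn hφexpCc
  have hh_int : IntegrableOn h (Icc s t) := by
    rwa [intervalIntegrable_iff_integrableOn_Icc_of_le hst] at hhI
  -- a.e. bound ψd ≤ h on [s, t]
  have haeb : ∀ᵐ u ∂volume.restrict (Icc s t), ψd u ≤ h u := by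
    have h1 : ∀ᵐ u ∂volume.restrict (Icc s t), 0 ≤ u → φ' u + a u * φ u ≤ b u :=
      ae_restrict_of_ae hineq
    have h2 : ∀ᵐ u ∂volume.restrict (Icc s t), u ∈ Icc s t :=
      ae_restrict_mem measurableSet_Icc
    filter_upwards [h1, h2] with u hu1 hu2
    have hu0 : (0:ℝ) ≤ u := hs.le.trans hu2.1
    have hφu : 0 ≤ φ u := hnonneg u hu0
    have key : φ' u + c u * φ u ≤ bp u + |c u - a u| * φ u := by
      have e1 : φ' u + a u * φ u ≤ b u := hu1 hu0
      have e2 : (c u - a u) * φ u ≤ |c u - a u| * φ u :=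
        mul_le_mul_of_nonneg_right (le_abs_self _) hφu
      have e3 : b u ≤ bp u := le_max_left _ _
      nlinarith
    have := mul_le_mul_of_nonneg_right key (Real.exp_pos (C u)).le
    simpa only [hψd, hh, add_mul, mul_assoc] using this
  -- apply the FTC comparison lemma with majorant g = max ψd h
  set g : ℝ → ℝ := fun u => max (ψd u) (h u) with hg
  have hg_int : IntegrableOn g (Icc s t) :=
    hh_int.congr (haeb.mono fun u hu => (max_eq_right hu).symm)
  have key : ψ t - ψ s ≤ ∫ u in s..t, g u := by
    refine intervalIntegral.sub_le_integral_of_hasDeriv_right_of_le hst hψcont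
      (fun x hx => (hψder x (hs.le.trans hx.1.le)).hasDerivWithinAt) hg_int
      (fun x _ => le_max_left _ _)
  have hgI : IntervalIntegrable g volume s t := by
    rw [intervalIntegrable_iff_integrableOn_Icc_of_le hst]; exact hg_int
  have hgh : (∫ u in s..t, g u) = ∫ u in s..t, h u := by
    refine intervalIntegral.integral_congr_ae ?_
    have := (ae_restrict_iff' measurableSet_Icc).1 haeb
    filter_upwards [this] with u hu huI
    have : u ∈ Icc s t := by
      rw [uIoc_of_le hst] at huI
      exact Ioc_subset_Icc_self huI
    exact max_eq_right (hu this)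
  -- bound the two pieces of ∫ h
  have hint_split : (∫ u in s..t, h u)
      = (∫ u in s..t, bp u * Real.exp (C u))
        + ∫ u in s..t, |c u - a u| * (φ u * Real.exp (C u)) := by
    rw [hh]
    exact intervalIntegral.integral_add (hbpI.mul_continuousOn hexpCc)
      (hcaI.mul_continuousOn hφexpCc)
  have hCleA : ∀ u ∈ Icc s t, Real.exp (C u) ≤ Real.exp ε * Real.exp (A u) := by
    intro u hu
    rw [← Real.exp_add]
    refine Real.exp_le_exp.2 ?_
    have := hclose u hu
    rw [abs_le] at this
    linarith [this.1, this.2]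
  have hb1 : (∫ u in s..t, bp u * Real.exp (C u)) ≤ Real.exp ε * S2 := by
    have : (∫ u in s..t, bp u * Real.exp (C u))
        ≤ ∫ u in s..t, Real.exp ε * (bp u * Real.exp (A u)) := by
      refine intervalIntegral.integral_mono_on hst (hbpI.mul_continuousOn hexpCc)
        ((hS2I.const_mul _)) ?_
      intro u hu
      have h1 : 0 ≤ bp u := le_max_right _ _
      have h2 := hCleA u hu
      calc bp u * Real.exp (C u) ≤ bp u * (Real.exp ε * Real.exp (A u)) :=
            mul_le_mul_of_nonneg_left h2 h1
        _ = Real.exp ε * (bp u * Real.exp (A u)) := by ring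
    rwa [intervalIntegral.integral_const_mul] at this
  have hb2 : (∫ u in s..t, |c u - a u| * (φ u * Real.exp (C u)))
      ≤ ε * (Real.exp ε * M0) := by
    have step : (∫ u in s..t, |c u - a u| * (φ u * Real.exp (C u)))
        ≤ ∫ u in s..t, |c u - a u| * (Real.exp ε * M0) := by
      refine intervalIntegral.integral_mono_on hst
        (hcaI.mul_continuousOn hφexpCc)
        (hcaI.mul_const _) ?_
      intro u hu
      refine mul_le_mul_of_nonneg_left ?_ (abs_nonneg _)
      have hφu : 0 ≤ φ u := hnonneg u (hs.le.trans hu.1)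
      calc φ u * Real.exp (C u) ≤ φ u * (Real.exp ε * Real.exp (A u)) :=
            mul_le_mul_of_nonneg_left (hCleA u hu) hφu
        _ = Real.exp ε * (φ u * Real.exp (A u)) := by ring
        _ ≤ Real.exp ε * M0 :=
            mul_le_mul_of_nonneg_left (hM0b u hu) (Real.exp_pos ε).le
    have habs : (∫ u in s..t, |c u - a u|) ≤ ε := by
      have h3 : (∫ τ in s..t, |c τ - a τ|) ≤ ∫ τ in Icc s t, |c τ - a τ| := by
        rw [intervalIntegral.integral_of_le hst]
        refine setIntegral_mono_set ((hc_cont.integrableOn_Icc).sub hai).norm ?_ ?_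
        · filter_upwards with x using abs_nonneg _
        · exact HasSubset.Subset.eventuallyLE Ioc_subset_Icc_self
      have h4 : (∫ τ in Icc s t, |c τ - a τ|)
          = ∫ τ in Icc s t, ‖(Icc s t).indicator a τ - c τ‖ := by
        refine setIntegral_congr_fun measurableSet_Icc fun x hx => ?_
        rw [indicator_of_mem hx, Real.norm_eq_abs, abs_sub_comm]
      have h5 : (∫ τ in Icc s t, ‖(Icc s t).indicator a τ - c τ‖)
          ≤ ∫ τ, ‖(Icc s t).indicator a τ - c τ‖ := by
        refine setIntegral_le_integral (haId.sub hc_int).norm ?_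
        filter_upwards with x using norm_nonneg _
      exact h3.trans ((h4.le.trans h5).trans hc_close)
    calc (∫ u in s..t, |c u - a u| * (φ u * Real.exp (C u)))
        ≤ ∫ u in s..t, |c u - a u| * (Real.exp ε * M0) := step
      _ = (∫ u in s..t, |c u - a u|) * (Real.exp ε * M0) := by
          rw [intervalIntegral.integral_mul_const]
      _ ≤ ε * (Real.exp ε * M0) := by
          refine mul_le_mul_of_nonneg_right habs ?_
          positivity
  -- endpoints of ψ
  have hψs : ψ s = φ s := by
    simp [hψ, hC]
  have hψt : Real.exp (-ε) * (φ t * Real.exp (A t)) ≤ ψ t := by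
    have htmem : t ∈ Icc s t := right_mem_Icc.2 hst
    have h1 : Real.exp (A t - ε) ≤ Real.exp (C t) := by
      refine Real.exp_le_exp.2 ?_
      have := hclose t htmem
      rw [abs_le] at this
      linarith [this.1]
    have hφt : 0 ≤ φ t := hnonneg t (hs.le.trans hst)
    calc Real.exp (-ε) * (φ t * Real.exp (A t)) = φ t * Real.exp (A t - ε) := by
          rw [Real.exp_sub, Real.exp_neg]; ring
      _ ≤ φ t * Real.exp (C t) := mul_le_mul_of_nonneg_left h1 hφt
      _ = ψ t := rfl
  -- final chain
  have hfinal : φ t * Real.exp (A t) ≤ Real.exp ε * (φ s + Real.exp ε * S2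
      + ε * (Real.exp ε * M0)) := by
    have h6 : ψ t ≤ φ s + ((∫ u in s..t, bp u * Real.exp (C u))
        + ∫ u in s..t, |c u - a u| * (φ u * Real.exp (C u))) := by
      have := key
      rw [hgh, hint_split] at this
      linarith [this, hψs.ge]
    have h7 : ψ t ≤ φ s + Real.exp ε * S2 + ε * (Real.exp ε * M0) := by
      linarith [hb1, hb2]
    have h8 : φ t * Real.exp (A t) = Real.exp ε * (Real.exp (-ε) * (φ t * Real.exp (A t))) := by
      rw [← mul_assoc, ← Real.exp_add]; simp
    rw [h8]
    calc Real.exp ε * (Real.exp (-ε) * (φ t * Real.exp (A t)))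
        ≤ Real.exp ε * ψ t := mul_le_mul_of_nonneg_left hψt (Real.exp_pos ε).le
      _ ≤ Real.exp ε * (φ s + Real.exp ε * S2 + ε * (Real.exp ε * M0)) :=
          mul_le_mul_of_nonneg_left h7 (Real.exp_pos ε).le
  refine hfinal.trans ?_
  have he1 : (1:ℝ) ≤ Real.exp ε := Real.one_le_exp hε0.le
  have he2 : Real.exp ε * Real.exp ε = Real.exp (2*ε) := by
    rw [← Real.exp_add]; ring_nf
  have hφs : 0 ≤ φ s := hnonneg s hs.le
  have hS2nn : 0 ≤ S2 := by
    rw [hS2]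
    refine intervalIntegral.integral_nonneg hst fun u hu => ?_
    positivity
  rw [← he2]
  nlinarith [mul_nonneg (mul_nonneg (Real.exp_pos ε).le (sub_nonneg.2 he1)) hφs,
    Real.exp_pos ε, hS2nn, hM0nn, hε0.le]

theorem stmt_1 (a b : ℝ → ℝ) (T : ℝ) (hT : 0 < T)
    (ha : LocallyIntegrableOn a (Set.Ioi 0))
    (hb : LocallyIntegrableOn b (Set.Ioi 0))
    (hliminf : 0 < liminf (fun t => (1/T) * ∫ τ in t..(t+T), a τ) atTop)
    (haminus : IsBoundedUnder (· ≤ ·) atTop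
      (fun t => (1/T) * ∫ τ in t..(t+T), max (-a τ) 0))
    (hbplusbd : IsBoundedUnder (· ≤ ·) atTop
      (fun t => (1/T) * ∫ τ in t..(t+T), max (b τ) 0))
    (hbplus : limsup (fun t => (1/T) * ∫ τ in t..(t+T), max (b τ) 0) atTop = 0)
    (φ φ' : ℝ → ℝ)
    (hnonneg : ∀ t, 0 ≤ t → 0 ≤ φ t)
    (hderiv : ∀ t, 0 ≤ t → HasDerivAt φ (φ' t) t)
    (hineq : ∀ᵐ t ∂volume, 0 ≤ t → φ' t + a t * φ t ≤ b t) :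
    Tendsto φ atTop (nhds 0) := by
  -- integrability of a, b, a⁻, b⁺ on compact subintervals of (0, ∞)
  have haI : ∀ u v : ℝ, 0 < u → IntegrableOn a (Icc u v) := fun u v hu =>
    ha.integrableOn_compact_subset (fun x hx => lt_of_lt_of_le hu hx.1) isCompact_Icc
  have hbI : ∀ u v : ℝ, 0 < u → IntegrableOn b (Icc u v) := fun u v hu =>
    hb.integrableOn_compact_subset (fun x hx => lt_of_lt_of_le hu hx.1) isCompact_Icc
  have hamI : ∀ u v : ℝ, 0 < u → IntegrableOn (fun τ => max (-a τ) 0) (Icc u v) := by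
    intro u v hu
    refine Integrable.mono (haI u v hu)
      (((haI u v hu).aemeasurable.neg.max aemeasurable_const).aestronglyMeasurable) ?_
    filter_upwards with x
    simp only [Real.norm_eq_abs]
    rw [abs_of_nonneg (le_max_right (-a x) 0)]
    exact max_le (neg_le_abs _) (abs_nonneg _)
  have hbpI : ∀ u v : ℝ, 0 < u → IntegrableOn (fun τ => max (b τ) 0) (Icc u v) := by
    intro u v hu
    refine Integrable.mono (hbI u v hu)
      (((hbI u v hu).aemeasurable.max aemeasurable_const).aestronglyMeasurable) ?_
    filter_upwards with x
    simp only [Real.norm_eq_abs]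
    rw [abs_of_nonneg (le_max_right (b x) 0)]
    exact max_le (le_abs_self _) (abs_nonneg _)
  have haII : ∀ u v : ℝ, 0 < u → u ≤ v → IntervalIntegrable a volume u v := by
    intro u v hu huv
    rw [intervalIntegrable_iff_integrableOn_Icc_of_le huv]; exact haI u v hu
  have hamII : ∀ u v : ℝ, 0 < u → u ≤ v →
      IntervalIntegrable (fun τ => max (-a τ) 0) volume u v := by
    intro u v hu huv
    rw [intervalIntegrable_iff_integrableOn_Icc_of_le huv]; exact hamI u v hu
  have hbpII : ∀ u v : ℝ, 0 < u → u ≤ v →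
      IntervalIntegrable (fun τ => max (b τ) 0) volume u v := by
    intro u v hu huv
    rw [intervalIntegrable_iff_integrableOn_Icc_of_le huv]; exact hbpI u v hu
  -- a bound M' for window averages of a⁻
  obtain ⟨M, hM⟩ := haminus
  rw [eventually_map] at hM
  set M' : ℝ := max M 0 with hM'def
  have hM'0 : 0 ≤ M' := le_max_right _ _
  have hM' : ∀ᶠ r in atTop, (∫ τ in r..(r+T), max (-a τ) 0) ≤ M' * T := by
    filter_upwards [hM] with r hr
    have h1 : (1/T) * ∫ τ in r..(r+T), max (-a τ) 0 ≤ M' := hr.trans (le_max_left _ _)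
    calc (∫ τ in r..(r+T), max (-a τ) 0)
        = T * ((1/T) * ∫ τ in r..(r+T), max (-a τ) 0) := by field_simp
      _ ≤ T * M' := mul_le_mul_of_nonneg_left h1 hT.le
      _ = M' * T := mul_comm _ _
  -- lower bound for window integrals of a, hence coboundedness for the liminf
  have hlow : ∀ᶠ r in atTop, -M' ≤ (1/T) * ∫ τ in r..(r+T), a τ := by
    filter_upwards [hM', eventually_ge_atTop (1:ℝ)] with r hr h1
    have hr0 : (0:ℝ) < r := lt_of_lt_of_le zero_lt_one h1
    have hrT : r ≤ r + T := by linarith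
    have hmono : (∫ τ in r..(r+T), -max (-a τ) 0) ≤ ∫ τ in r..(r+T), a τ := by
      refine intervalIntegral.integral_mono_on hrT ((hamII r (r+T) hr0 hrT).neg)
        (haII r (r+T) hr0 hrT) fun x _ => ?_
      rcases le_or_gt (a x) 0 with h | h
      · rw [max_eq_left (by linarith)]; simp
      · rw [max_eq_right (by linarith)]; simp [h.le]
    rw [intervalIntegral.integral_neg] at hmono
    have h2 : -(M' * T) ≤ ∫ τ in r..(r+T), a τ := le_trans (by linarith) hmono
    have h3 : (1/T) * (-(M'*T)) ≤ (1/T) * ∫ τ in r..(r+T), a τ :=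
      mul_le_mul_of_nonneg_left h2 (by positivity)
    have h4 : (1/T) * (-(M'*T)) = -M' := by field_simp
    linarith
  -- extraction of α > 0 with eventual window lower bounds
  have hbdd : IsBoundedUnder (· ≥ ·) atTop (fun t => (1/T) * ∫ τ in t..(t+T), a τ) :=
    ⟨-M', by rwa [eventually_map]⟩
  set L : ℝ := liminf (fun t => (1/T) * ∫ τ in t..(t+T), a τ) atTop with hL
  set α : ℝ := L / 2 with hα
  have hα0 : 0 < α := by positivity
  have hαev : ∀ᶠ r in atTop, α < (1/T) * ∫ τ in r..(r+T), a τ :=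
    eventually_lt_of_lt_liminf (by rw [← hL]; linarith) hbdd
  have hwin_a : ∀ᶠ r in atTop, α * T ≤ ∫ τ in r..(r+T), a τ := by
    filter_upwards [hαev] with r hr
    calc α * T = T * α := mul_comm _ _
      _ ≤ T * ((1/T) * ∫ τ in r..(r+T), a τ) := mul_le_mul_of_nonneg_left hr.le hT.le
      _ = ∫ τ in r..(r+T), a τ := by field_simp
  -- constants
  set K : ℝ := Real.exp ((α + M') * T) with hK
  have hK0 : 0 < K := Real.exp_pos _
  set q : ℝ := Real.exp (-(α * T)) with hq
  have hq0 : 0 < q := Real.exp_pos _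
  have hq1 : q < 1 := Real.exp_lt_one_iff.mpr (by nlinarith)
  have h1q : 0 < 1 - q := by linarith
  -- start of the limit argument
  rw [NormedAddCommGroup.tendsto_nhds_zero]
  intro ε' hε'
  set ε : ℝ := ε' * (1 - q) / (2 * K * T) with hε
  have hε0 : 0 < ε := by positivity
  have hwin_b : ∀ᶠ r in atTop, (∫ τ in r..(r+T), max (b τ) 0) ≤ ε * T := by
    have := eventually_lt_of_limsup_lt (by rw [hbplus]; exact hε0) hbplusbd
    filter_upwards [this] with r hr
    calc (∫ τ in r..(r+T), max (b τ) 0)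
        = T * ((1/T) * ∫ τ in r..(r+T), max (b τ) 0) := by field_simp
      _ ≤ T * ε := mul_le_mul_of_nonneg_left hr.le hT.le
      _ = ε * T := mul_comm _ _
  -- combine all eventual statements into a single threshold t0 ≥ 1
  obtain ⟨t1, ht1⟩ := eventually_atTop.1 ((hwin_a.and hM').and hwin_b)
  set s : ℝ := max t1 1 with hsdef
  have hs1 : (1:ℝ) ≤ s := le_max_right _ _
  have hs0 : (0:ℝ) < s := lt_of_lt_of_le zero_lt_one hs1
  have hwa : ∀ r, s ≤ r → α * T ≤ ∫ τ in r..(r+T), a τ := fun r hr =>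
    (ht1 r ((le_max_left _ _).trans hr)).1.1
  have hwm : ∀ r, s ≤ r → (∫ τ in r..(r+T), max (-a τ) 0) ≤ M' * T := fun r hr =>
    (ht1 r ((le_max_left _ _).trans hr)).1.2
  have hwb : ∀ r, s ≤ r → (∫ τ in r..(r+T), max (b τ) 0) ≤ ε * T := fun r hr =>
    (ht1 r ((le_max_left _ _).trans hr)).2
  -- lower bound for ∫_u^t a when s ≤ u ≤ t
  have key1 : ∀ u t : ℝ, s ≤ u → u ≤ t → α * (t - u) - (α + M') * T ≤ ∫ τ in u..t, a τ := by
    intro u t hu hut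
    have hu0 : (0:ℝ) < u := lt_of_lt_of_le hs0 hu
    set n : ℕ := ⌊(t - u) / T⌋₊ with hn
    have claim1 : ∀ m : ℕ, (m:ℝ) * (α * T) ≤ ∫ τ in u..(u + m * T), a τ := by
      intro m
      induction m with
      | zero => simp
      | succ k ih =>
        have hkT : (0:ℝ) ≤ (k:ℝ) * T := by positivity
        have h1 : u ≤ u + (k:ℝ) * T := by linarith
        have hrs : s ≤ u + (k:ℝ) * T := by linarith
        have hsplit : (∫ τ in u..(u + (k:ℝ)*T), a τ)
            + (∫ τ in (u + (k:ℝ)*T)..(u + (k:ℝ)*T + T), a τ)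
            = ∫ τ in u..(u + (k:ℝ)*T + T), a τ :=
          intervalIntegral.integral_add_adjacent_intervals
            (haII u (u + (k:ℝ)*T) hu0 h1)
            (haII (u + (k:ℝ)*T) (u + (k:ℝ)*T + T) (by linarith) (by linarith))
        have hwin := hwa (u + (k:ℝ)*T) hrs
        have heq : u + ((k:ℕ)+1 : ℕ) * T = u + (k:ℝ)*T + T := by push_cast; ring
        rw [heq, ← hsplit]
        push_cast
        linarith
    have hTne : T ≠ 0 := hT.ne'
    have h0tu : (0:ℝ) ≤ (t - u)/T := div_nonneg (by linarith) hT.le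
    have hn1 : u + (n:ℝ) * T ≤ t := by
      have h2 := Nat.floor_le h0tu
      have h3 : (n:ℝ) * T ≤ (t - u)/T * T := mul_le_mul_of_nonneg_right h2 hT.le
      rw [div_mul_cancel₀ _ hTne] at h3
      linarith
    have hn2 : t ≤ u + (n:ℝ) * T + T := by
      have h2 := Nat.lt_floor_add_one ((t - u)/T)
      have h3 : (t - u)/T * T < ((n:ℝ) + 1) * T :=
        mul_lt_mul_of_pos_right h2 hT
      rw [div_mul_cancel₀ _ hTne] at h3
      linarith
    have hkT : (0:ℝ) ≤ (n:ℝ) * T := by positivity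
    have hrs : s ≤ u + (n:ℝ)*T := by linarith
    have hr0 : (0:ℝ) < u + (n:ℝ)*T := by linarith
    have hlow2 : -(M' * T) ≤ ∫ τ in (u + (n:ℝ)*T)..t, a τ := by
      have hmono : (∫ τ in (u + (n:ℝ)*T)..t, -max (-a τ) 0)
          ≤ ∫ τ in (u + (n:ℝ)*T)..t, a τ := by
        refine intervalIntegral.integral_mono_on hn1 ((hamII _ _ hr0 hn1).neg)
          (haII _ _ hr0 hn1) fun x _ => ?_
        rcases le_or_gt (a x) 0 with h | h
        · rw [max_eq_left (by linarith)]; simp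
        · rw [max_eq_right (by linarith)]; simp [h.le]
      have hsplit : (∫ τ in (u + (n:ℝ)*T)..t, max (-a τ) 0)
          + (∫ τ in t..(u + (n:ℝ)*T + T), max (-a τ) 0)
          = ∫ τ in (u + (n:ℝ)*T)..(u + (n:ℝ)*T + T), max (-a τ) 0 :=
        intervalIntegral.integral_add_adjacent_intervals
          (hamII _ _ hr0 hn1) (hamII t _ (by linarith [hs0, hu, hut]) (by linarith))
      have hpos : 0 ≤ ∫ τ in t..(u + (n:ℝ)*T + T), max (-a τ) 0 :=
        intervalIntegral.integral_nonneg (by linarith) (fun x _ => le_max_right _ _)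
      have hwinm := hwm (u + (n:ℝ)*T) hrs
      rw [intervalIntegral.integral_neg] at hmono
      linarith
    have hsplit2 : (∫ τ in u..(u + (n:ℝ)*T), a τ) + (∫ τ in (u + (n:ℝ)*T)..t, a τ)
        = ∫ τ in u..t, a τ :=
      intervalIntegral.integral_add_adjacent_intervals
        (haII u _ hu0 (by linarith)) (haII _ t hr0 hn1)
    have hfloor : α * (t - u) - α * T ≤ (n:ℝ) * (α * T) := by nlinarith [hα0.le]
    have := claim1 n
    rw [← hsplit2]
    nlinarith
  -- geometric decay bound for the b⁺ part
  set Cg : ℝ := ε * T / (1 - q) with hCg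
  have hCg0 : 0 ≤ Cg := by positivity
  have hCgT : ε * T ≤ Cg := by
    rw [hCg, le_div_iff₀ h1q]
    nlinarith [mul_pos hε0 hT]
  have keyJ : ∀ t : ℝ, s ≤ t →
      (∫ u in s..t, max (b u) 0 * Real.exp (-(α * (t - u)))) ≤ Cg := by
    have J : ∀ n : ℕ, ∀ t : ℝ, s ≤ t → t ≤ s + n * T →
        (∫ u in s..t, max (b u) 0 * Real.exp (-(α * (t - u)))) ≤ Cg := by
      intro n
      induction n with
      | zero =>
        intro t h1 h2
        have : t = s := le_antisymm (by simpa using h2) h1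
        rw [this]
        simpa using hCg0
      | succ k ih =>
        intro t h1 h2
        -- integrability of the integrands we use
        have hbpe : ∀ v w : ℝ, 0 < v → v ≤ w →
            IntervalIntegrable (fun u => max (b u) 0 * Real.exp (-(α * (t - u)))) volume v w := by
          intro v w hv hvw
          have hce : Continuous fun u : ℝ => Real.exp (-(α * (t - u))) :=
            Real.continuous_exp.comp ((continuous_const.mul (continuous_const.sub continuous_id)).neg)
          exact (hbpII v w hv hvw).mul_continuousOn hce.continuousOn
        rcases le_or_gt t (s + k * T) with hcase | hcase
        · exact ih t h1 hcase
        rcases le_or_gt t (s + T) with hcase2 | hcase2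
        · -- one window: direct estimate
          have hb1 : (∫ u in s..t, max (b u) 0 * Real.exp (-(α * (t - u))))
              ≤ ∫ u in s..t, max (b u) 0 := by
            refine intervalIntegral.integral_mono_on h1 (hbpe s t hs0 h1)
              (hbpII s t hs0 h1) fun x hx => ?_
            have h3 : Real.exp (-(α * (t - x))) ≤ 1 := by
              rw [Real.exp_le_one_iff]
              nlinarith [hx.2, hα0]
            nlinarith [le_max_right (b x) 0, Real.exp_pos (-(α * (t - x)))]
          have hb2 : (∫ u in s..t, max (b u) 0) ≤ ∫ u in s..(s+T), max (b u) 0 := by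
            have hsplit : (∫ u in s..t, max (b u) 0) + (∫ u in t..(s+T), max (b u) 0)
                = ∫ u in s..(s+T), max (b u) 0 :=
              intervalIntegral.integral_add_adjacent_intervals (hbpII s t hs0 h1)
                (hbpII t (s+T) (lt_of_lt_of_le hs0 h1) hcase2)
            have hpos : 0 ≤ ∫ u in t..(s+T), max (b u) 0 :=
              intervalIntegral.integral_nonneg hcase2 (fun x _ => le_max_right _ _)
            linarith
          exact hb1.trans (hb2.trans ((hwb s le_rfl).trans hCgT))
        · -- more than one window: peel off the last one
          set r : ℝ := t - T with hr
          have hsr : s ≤ r := by rw [hr]; linarith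
          have hrt : r ≤ t := by rw [hr]; linarith
          have hr0 : (0:ℝ) < r := lt_of_lt_of_le hs0 hsr
          have hrk : r ≤ s + k * T := by
            rw [hr]
            have : t ≤ s + ((k:ℝ) + 1) * T := by push_cast at h2 ⊢; linarith
            linarith
          -- split the integral
          have hsplit : (∫ u in s..r, max (b u) 0 * Real.exp (-(α * (t - u))))
              + (∫ u in r..t, max (b u) 0 * Real.exp (-(α * (t - u))))
              = ∫ u in s..t, max (b u) 0 * Real.exp (-(α * (t - u))) :=
            intervalIntegral.integral_add_adjacent_intervals (hbpe s r hs0 hsr)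
              (hbpe r t hr0 hrt)
          -- last window piece
          have hlast : (∫ u in r..t, max (b u) 0 * Real.exp (-(α * (t - u)))) ≤ ε * T := by
            have hb1 : (∫ u in r..t, max (b u) 0 * Real.exp (-(α * (t - u))))
                ≤ ∫ u in r..t, max (b u) 0 := by
              refine intervalIntegral.integral_mono_on hrt (hbpe r t hr0 hrt)
                (hbpII r t hr0 hrt) fun x hx => ?_
              have h3 : Real.exp (-(α * (t - x))) ≤ 1 := by
                rw [Real.exp_le_one_iff]
                nlinarith [hx.2, hα0]
              nlinarith [le_max_right (b x) 0, Real.exp_pos (-(α * (t - x)))]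
            have h4 : r + T = t := by rw [hr]; ring
            have := hwb r hsr
            rw [h4] at this
            linarith
          -- first piece via the inductive hypothesis
          have hfirst : (∫ u in s..r, max (b u) 0 * Real.exp (-(α * (t - u))))
              = q * ∫ u in s..r, max (b u) 0 * Real.exp (-(α * (r - u))) := by
            rw [← intervalIntegral.integral_const_mul]
            refine intervalIntegral.integral_congr fun x _ => ?_
            have hee : Real.exp (-(α * (t - x))) = Real.exp (-(α*T)) * Real.exp (-(α*(r-x))) := by
              rw [← Real.exp_add]; congr 1; rw [hr]; ring
            rw [hq, hee]; ring
          have hih := ih r hsr hrk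
          have hq_mul : q * (∫ u in s..r, max (b u) 0 * Real.exp (-(α * (r - u)))) ≤ q * Cg :=
            mul_le_mul_of_nonneg_left hih hq0.le
          have harith : q * Cg + ε * T = Cg := by
            rw [hCg]; field_simp; ring
          rw [← hsplit, hfirst]
          linarith
    intro t ht
    refine J (⌊(t - s)/T⌋₊ + 1) t ht ?_
    have h2 := Nat.lt_floor_add_one ((t - s)/T)
    have h3 : (t - s)/T * T < ((⌊(t - s)/T⌋₊ : ℝ) + 1) * T := mul_lt_mul_of_pos_right h2 hT
    rw [div_mul_cancel₀ _ hT.ne'] at h3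
    push_cast
    linarith
  -- main estimate from the Gronwall lemma
  have main : ∀ t : ℝ, s ≤ t → φ t ≤ φ s * (K * Real.exp (-(α * (t - s)))) + K * Cg := by
    intro t ht
    have hgron := gronwall_exp a b φ φ' s t hs0 ht (haI s t hs0) (hbI s t hs0)
      hnonneg hderiv hineq
    set I : ℝ := ∫ τ in s..t, a τ with hI
    have hAcont : ContinuousOn (fun u => ∫ τ in s..u, a τ) (Icc s t) := by
      have := intervalIntegral.continuousOn_primitive_interval (a := s) (b := t) (μ := volume)
        (f := a) (by rw [uIcc_of_le ht]; exact haI s t hs0)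
      rwa [uIcc_of_le ht] at this
    have hce : Continuous fun u : ℝ => Real.exp (-(α * (t - u))) :=
      Real.continuous_exp.comp ((continuous_const.mul (continuous_const.sub continuous_id)).neg)
    have hf1I : IntervalIntegrable (fun u => max (b u) 0 * Real.exp (∫ τ in s..u, a τ))
        volume s t :=
      (hbpII s t hs0 ht).mul_continuousOn
        (by rw [uIcc_of_le ht]; exact Real.continuous_exp.comp_continuousOn hAcont)
    have hf2I : IntervalIntegrable (fun u => K * (max (b u) 0 * Real.exp (-(α * (t - u)))))
        volume s t :=
      ((hbpII s t hs0 ht).mul_continuousOn hce.continuousOn).const_mul K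
    have hterm2 : (∫ u in s..t, max (b u) 0 * Real.exp (∫ τ in s..u, a τ)) * Real.exp (-I)
        ≤ K * Cg := by
      rw [← intervalIntegral.integral_mul_const]
      have hmono : (∫ u in s..t, max (b u) 0 * Real.exp (∫ τ in s..u, a τ) * Real.exp (-I))
          ≤ ∫ u in s..t, K * (max (b u) 0 * Real.exp (-(α * (t - u)))) := by
        refine intervalIntegral.integral_mono_on ht (hf1I.mul_const _) hf2I fun u hu => ?_
        have hu0 : (0:ℝ) < u := lt_of_lt_of_le hs0 hu.1
        have hsplit : (∫ τ in s..u, a τ) + (∫ τ in u..t, a τ) = I :=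
          intervalIntegral.integral_add_adjacent_intervals (haII s u hs0 hu.1)
            (haII u t hu0 hu.2)
        have hk := key1 u t hu.1 hu.2
        have hexp : Real.exp (∫ τ in s..u, a τ) * Real.exp (-I)
            = Real.exp (-(∫ τ in u..t, a τ)) := by
          rw [← Real.exp_add]; congr 1; linarith
        have h7 : Real.exp (-(∫ τ in u..t, a τ)) ≤ K * Real.exp (-(α * (t - u))) := by
          rw [hK, ← Real.exp_add]
          exact Real.exp_le_exp.2 (by linarith)
        calc max (b u) 0 * Real.exp (∫ τ in s..u, a τ) * Real.exp (-I)
            = max (b u) 0 * (Real.exp (∫ τ in s..u, a τ) * Real.exp (-I)) := by ring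
          _ = max (b u) 0 * Real.exp (-(∫ τ in u..t, a τ)) := by rw [hexp]
          _ ≤ max (b u) 0 * (K * Real.exp (-(α * (t - u)))) :=
              mul_le_mul_of_nonneg_left h7 (le_max_right _ _)
          _ = K * (max (b u) 0 * Real.exp (-(α * (t - u)))) := by ring
      have hconst : (∫ u in s..t, K * (max (b u) 0 * Real.exp (-(α * (t - u)))))
          = K * ∫ u in s..t, max (b u) 0 * Real.exp (-(α * (t - u))) :=
        intervalIntegral.integral_const_mul _ _
      refine hmono.trans ?_
      rw [hconst]
      exact mul_le_mul_of_nonneg_left (keyJ t ht) hK0.le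
    have hterm1 : φ s * Real.exp (-I) ≤ φ s * (K * Real.exp (-(α * (t - s)))) := by
      refine mul_le_mul_of_nonneg_left ?_ (hnonneg s hs0.le)
      have hk := key1 s t le_rfl ht
      rw [hK, ← Real.exp_add]
      exact Real.exp_le_exp.2 (by linarith)
    have h8 : φ t ≤ (φ s + ∫ u in s..t, max (b u) 0 * Real.exp (∫ τ in s..u, a τ))
        * Real.exp (-I) := by
      calc φ t = φ t * Real.exp I * Real.exp (-I) := by
            rw [mul_assoc, ← Real.exp_add]; simp
        _ ≤ _ := mul_le_mul_of_nonneg_right hgron (Real.exp_pos _).le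
    rw [add_mul] at h8
    linarith
  -- conclusion
  have hdecay : Tendsto (fun t : ℝ => φ s * (K * Real.exp (-(α * (t - s))))) atTop (𝓝 0) := by
    have h1 : Tendsto (fun t : ℝ => α * (t - s)) atTop atTop :=
      (tendsto_atTop_add_const_right _ (-s) tendsto_id).const_mul_atTop hα0
    have h2 : Tendsto (fun t : ℝ => -(α * (t - s))) atTop atBot :=
      tendsto_neg_atTop_atBot.comp h1
    have h3 : Tendsto (fun t : ℝ => Real.exp (-(α * (t - s)))) atTop (𝓝 0) :=
      Real.tendsto_exp_atBot.comp h2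
    have h4 := h3.const_mul (φ s * K)
    simpa [mul_assoc] using h4
  have hKCg : K * Cg = ε' / 2 := by
    rw [hCg, hε]
    field_simp
  have hev1 : ∀ᶠ t in atTop, φ s * (K * Real.exp (-(α * (t - s)))) < ε' / 2 :=
    hdecay.eventually (gt_mem_nhds (by linarith))
  filter_upwards [hev1, eventually_ge_atTop s] with t h1 h2
  have h4 : 0 ≤ φ t := hnonneg t (le_trans hs0.le h2)
  rw [Real.norm_eq_abs, abs_of_nonneg h4]
  have h3 := main t h2
  linarith [hKCg]
end

section
/- Suppose a nonnegative absolutely continuous φ on [t₀,∞) satisfies, almost everywhere, φ' ≤ -aφ + bφ^{3/2} + c with a,b,c > 0 and b√c < (a/2)^{3/2}, and φ(t₀) ≤ c/a. Then φ(t) < 2c/a for all t ≥ t₀ and, moreover, the threshold value φ* = 2c/a is a strict subsolution barrier: at any point where φ(t) = 2c/a one has -aφ + bφ^{3/2} + c < 0. -/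
open MeasureTheory Set

-- Goldowsky–Tonelli, strict version
theorem myGT {g g' : ℝ → ℝ} {u v : ℝ} (huv : u ≤ v)
    (hd : ∀ t ∈ Icc u v, HasDerivAt g (g' t) t)
    {E : Set ℝ} (hE : volume E = 0)
    (hg' : ∀ t ∈ Icc u v, t ∉ E → g' t < 0) :
    g v ≤ g u := by
  by_contra hcon
  push_neg at hcon
  have hlt : u < v := by
    rcases eq_or_lt_of_le huv with rfl | h
    · exact absurd hcon (lt_irrefl _)
    · exact h
  have hcont : ContinuousOn g (Icc u v) := fun t ht =>
    (hd t ht).continuousAt.continuousWithinAt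
  -- image of null set is null
  have hdiff : DifferentiableOn ℝ g (E ∩ Icc u v) := fun t ht =>
    ((hd t ht.2).differentiableAt).differentiableWithinAt
  have hEnull : volume (E ∩ Icc u v) = 0 :=
    le_antisymm (le_trans (measure_mono (inter_subset_left)) hE.le) zero_le
  have himg : volume (g '' (E ∩ Icc u v)) = 0 :=
    addHaar_image_eq_zero_of_differentiableOn_of_addHaar_eq_zero volume hdiff hEnull
  -- find y in (g u, g v) avoiding the image
  have hex : ∃ y ∈ Ioo (g u) (g v), y ∉ g '' (E ∩ Icc u v) := by
    by_contra h
    push_neg at h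
    have : Ioo (g u) (g v) ⊆ g '' (E ∩ Icc u v) := fun y hy => h y hy
    have := measure_mono (μ := volume) this
    rw [himg, Real.volume_Ioo] at this
    have h0 : ENNReal.ofReal (g v - g u) = 0 := le_antisymm this zero_le
    rw [ENNReal.ofReal_eq_zero] at h0
    linarith
  obtain ⟨y, hy, hyim⟩ := hex
  -- T = level set
  set T : Set ℝ := Icc u v ∩ g ⁻¹' {y} with hT
  have hTne : T.Nonempty := by
    have : y ∈ g '' Icc u v := intermediate_value_Icc huv hcont ⟨hy.1.le, hy.2.le⟩
    obtain ⟨x, hx, hgx⟩ := this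
    exact ⟨x, hx, by simp [hgx]⟩
  have hTclosed : IsClosed T :=
    hcont.preimage_isClosed_of_isClosed isClosed_Icc isClosed_singleton
  have hTbdd : BddAbove T := BddAbove.mono (inter_subset_left) (bddAbove_Icc)
  set x := sSup T with hx
  have hxT : x ∈ T := hTclosed.csSup_mem hTne hTbdd
  have hxIcc : x ∈ Icc u v := hxT.1
  have hgxy : g x = y := hxT.2
  have hxv : x < v := by
    rcases lt_or_eq_of_le hxIcc.2 with h | h
    · exact h
    · exfalso; rw [h] at hgxy; exact absurd hgxy (ne_of_gt hy.2)
  -- on (x, v], g > y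
  have hright : ∀ t ∈ Ioc x v, y < g t := by
    intro t ht
    by_contra h
    push_neg at h
    rcases eq_or_lt_of_le h with h2 | h2
    · have : t ∈ T := ⟨⟨hxIcc.1.trans ht.1.le, ht.2⟩, by simp [← h2]⟩
      exact absurd (le_csSup hTbdd this) (not_le.2 ht.1)
    · -- IVT on [t, v]
      have hcont' : ContinuousOn g (Icc t v) :=
        hcont.mono (Icc_subset_Icc (hxIcc.1.trans ht.1.le) le_rfl)
      have : y ∈ g '' Icc t v := intermediate_value_Icc ht.2 hcont' ⟨h2.le, hy.2.le⟩
      obtain ⟨t', ht', hgt'⟩ := this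
      have : t' ∈ T := ⟨⟨hxIcc.1.trans (ht.1.le.trans ht'.1), ht'.2⟩, by simp [hgt']⟩
      have := le_csSup hTbdd this
      have : x < x := lt_of_lt_of_le (lt_of_lt_of_le ht.1 ht'.1) this
      exact absurd this (lt_irrefl _)
  -- derivative at x is ≥ 0
  have hge : 0 ≤ g' x := by
    have hdw : HasDerivWithinAt g (g' x) (Ioc x v) x := (hd x hxIcc).hasDerivWithinAt
    rw [hasDerivWithinAt_iff_tendsto_slope] at hdw
    have hne : (nhdsWithin x (Ioc x v \ {x})).NeBot := by
      rw [diff_singleton_eq_self (fun h => (lt_irrefl x h.1))]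
      exact left_nhdsWithin_Ioc_neBot hxv
    refine ge_of_tendsto hdw ?_
    filter_upwards [self_mem_nhdsWithin] with t ht
    have ht' : t ∈ Ioc x v := ht.1
    have h1 : 0 < g t - g x := by
      have := hright t ht'
      rw [hgxy]; linarith
    have h2 : 0 < t - x := sub_pos.2 ht'.1
    rw [slope_def_field]
    positivity
  -- x not in E
  have hxE : x ∉ E := by
    intro h
    exact hyim ⟨x, ⟨h, hxIcc⟩, hgxy⟩
  exact absurd (hg' x hxIcc hxE) (not_lt.2 hge)

-- nonstrict version
theorem myGT_le {g g' : ℝ → ℝ} {u v : ℝ} (huv : u ≤ v)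
    (hd : ∀ t ∈ Icc u v, HasDerivAt g (g' t) t)
    {E : Set ℝ} (hE : volume E = 0)
    (hg' : ∀ t ∈ Icc u v, t ∉ E → g' t ≤ 0) :
    g v ≤ g u := by
  have key : ∀ ε > (0:ℝ), g v - ε * v ≤ g u - ε * u := by
    intro ε hε
    have := myGT (g := fun t => g t - ε * t) (g' := fun t => g' t - ε) huv
      (fun t ht => by
        have h1 : HasDerivAt (fun s => ε * s) ε t := by
          simpa using (hasDerivAt_id t).const_mul ε
        exact (hd t ht).sub h1)
      hE (fun t ht htE => by have := hg' t ht htE; show g' t - ε < 0; linarith)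
    simpa using this
  by_contra h
  push_neg at h
  rcases le_or_gt v u with h2 | h2
  · have : u = v := le_antisymm huv h2
    rw [this] at h; exact absurd h (lt_irrefl _)
  · set ε := (g v - g u) / (2 * (v - u)) with hε
    have hεpos : 0 < ε := by rw [hε]; exact div_pos (by linarith) (by linarith)
    have := key ε hεpos
    have : g v - g u ≤ ε * (v - u) := by linarith
    have hw : (0:ℝ) < v - u := by linarith
    have h3 : ε * (2 * (v - u)) = g v - g u := by
      rw [hε]; field_simp
    nlinarith [mul_pos hεpos hw]

theorem my_h32 (x : ℝ) (hx : 0 ≤ x) : x ^ ((3:ℝ)/2) = x * Real.sqrt x := by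
  rcases eq_or_lt_of_le hx with rfl | hx'
  · rw [Real.zero_rpow (by norm_num), Real.sqrt_zero, mul_zero]
  · rw [show (3:ℝ)/2 = 1 + 1/2 by norm_num, Real.rpow_add hx', Real.rpow_one,
      Real.sqrt_eq_rpow]

theorem stmt_13 (a b c t₀ : ℝ) (ha : 0 < a) (hb : 0 < b) (hc : 0 < c)
    (hcond : b * Real.sqrt c < (a / 2) ^ ((3:ℝ)/2))
    (φ φ' : ℝ → ℝ)
    (hnonneg : ∀ t, t₀ ≤ t → 0 ≤ φ t)
    (hderiv : ∀ t, t₀ ≤ t → HasDerivAt φ (φ' t) t)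
    (hineq : ∀ᵐ t ∂volume, t₀ ≤ t → φ' t ≤ -a * φ t + b * φ t ^ ((3:ℝ)/2) + c)
    (hinit : φ t₀ ≤ c / a) :
    (∀ t, t₀ ≤ t → φ t < 2 * c / a) ∧
      b * (2 * c / a) ^ ((3:ℝ)/2) + c < a * (2 * c / a) := by
  set K : ℝ := 2 * c / a with hKdef
  have hKpos : 0 < K := by positivity
  have h2K : a * K = 2 * c := by rw [hKdef]; field_simp
  -- key algebraic inequality : b * K^{3/2} < c
  have hsq : b ^ 2 * c < (a/2)^3 := by
    have h1 : (b * Real.sqrt c) ^ 2 < ((a/2) ^ ((3:ℝ)/2)) ^ 2 := by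
      apply pow_lt_pow_left₀ hcond (by positivity)
      norm_num
    have h2 : (b * Real.sqrt c) ^ 2 = b ^ 2 * c := by
      rw [mul_pow, Real.sq_sqrt hc.le]
    have h3 : ((a/2) ^ ((3:ℝ)/2)) ^ 2 = (a/2)^3 := by
      rw [← Real.rpow_natCast ((a/2) ^ ((3:ℝ)/2)) 2, ← Real.rpow_mul (by positivity)]
      norm_num
    rw [h2, h3] at h1
    exact h1
  have hbK : b * K ^ ((3:ℝ)/2) < c := by
    have h4 : (b * K ^ ((3:ℝ)/2)) ^ 2 < c ^ 2 := by
      have h5 : (K ^ ((3:ℝ)/2)) ^ 2 = K ^ 3 := by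
        rw [← Real.rpow_natCast (K ^ ((3:ℝ)/2)) 2, ← Real.rpow_mul hKpos.le]
        norm_num
      rw [mul_pow, h5]
      have hK3 : K ^ 3 = 8 * c^3 / a^3 := by
        rw [hKdef]; field_simp; ring
      rw [hK3, show b ^ 2 * (8 * c ^ 3 / a ^ 3) = 8 * b^2 * c^3 / a^3 by ring,
        div_lt_iff₀ (by positivity)]
      nlinarith [mul_lt_mul_of_pos_right hsq (pow_pos hc 2)]
    have h6 : 0 ≤ b * K ^ ((3:ℝ)/2) := by positivity
    nlinarith [h4, h6, hc]
  have hkey : b * K ^ ((3:ℝ)/2) + c < a * K := by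
    rw [h2K]; linarith
  refine ⟨?_, hkey⟩
  -- slope bound : b * sqrt K < a / 2
  have hslope : b * Real.sqrt K < a / 2 := by
    have h7 : b * (K * Real.sqrt K) < c := by rwa [my_h32 K hKpos.le] at hbK
    have h8 : 0 < Real.sqrt K := Real.sqrt_pos.2 hKpos
    nlinarith [h7, h2K, hKpos]
  -- barrier argument
  intro T hT
  by_contra hcontra
  push_neg at hcontra
  set S : Set ℝ := Ici t₀ ∩ φ ⁻¹' (Ici K) with hSdef
  have hcont : ContinuousOn φ (Ici t₀) := fun t ht =>
    (hderiv t ht).continuousAt.continuousWithinAt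
  have hScl : IsClosed S :=
    hcont.preimage_isClosed_of_isClosed isClosed_Ici isClosed_Ici
  have hSne : S.Nonempty := ⟨T, hT, hcontra⟩
  have hbdd : BddBelow S := ⟨t₀, fun s hs => hs.1⟩
  set t₁ : ℝ := sInf S with ht₁def
  have ht₁S : t₁ ∈ S := hScl.csInf_mem hSne hbdd
  have ht₀₁ : t₀ ≤ t₁ := ht₁S.1
  have hφt₁ : K ≤ φ t₁ := ht₁S.2
  have hbefore : ∀ t, t₀ ≤ t → t < t₁ → φ t < K := by
    intro t h1 h2
    by_contra h3
    push_neg at h3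
    exact absurd (csInf_le hbdd ⟨h1, h3⟩) (not_le.2 h2)
  -- null set
  rw [Filter.eventually_iff, mem_ae_iff] at hineq
  set E : Set ℝ := {t | t₀ ≤ t → φ' t ≤ -a * φ t + b * φ t ^ ((3:ℝ)/2) + c}ᶜ ∪ {t₁}
    with hEdef
  have hEnull : volume E = 0 :=
    measure_union_null hineq Real.volume_singleton
  -- the auxiliary function
  set ψ : ℝ → ℝ := fun t => Real.exp (a/2 * t) * (φ t - K) with hψdef
  set Ψ : ℝ → ℝ := fun t =>
    a/2 * Real.exp (a/2 * t) * (φ t - K) + Real.exp (a/2 * t) * φ' t with hΨdef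
  have hψd : ∀ t ∈ Set.Icc t₀ t₁, HasDerivAt ψ (Ψ t) t := by
    intro t ht
    have h0 : HasDerivAt (fun s : ℝ => a/2 * s) (a/2) t := by
      simpa using (hasDerivAt_id t).const_mul (a/2)
    have h1 : HasDerivAt (fun s => Real.exp (a/2 * s)) (a/2 * Real.exp (a/2 * t)) t := by
      have h1' := (Real.hasDerivAt_exp (a/2 * t)).comp t h0
      exact h1'.congr_deriv (mul_comm _ _)
    have h2 : HasDerivAt (fun s => φ s - K) (φ' t) t := (hderiv t ht.1).sub_const K
    exact h1.mul h2
  have hΨle : ∀ t ∈ Set.Icc t₀ t₁, t ∉ E → Ψ t ≤ 0 := by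
    intro t ht htE
    rw [hEdef, Set.mem_union, not_or] at htE
    obtain ⟨htN, htne⟩ := htE
    have hineq_t : φ' t ≤ -a * φ t + b * φ t ^ ((3:ℝ)/2) + c := by
      have := Set.notMem_compl_iff.mp htN
      exact this ht.1
    have hlt : t < t₁ := lt_of_le_of_ne ht.2 (fun h => htne (by simp [h]))
    have hφlt : φ t < K := hbefore t ht.1 hlt
    have hφ0 : 0 ≤ φ t := hnonneg t ht.1
    -- b * φt^{3/2} ≤ a/2 * φt
    have hbb : b * φ t ^ ((3:ℝ)/2) ≤ a/2 * φ t := by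
      rw [my_h32 (φ t) hφ0]
      have hsx : Real.sqrt (φ t) ≤ Real.sqrt K := Real.sqrt_le_sqrt hφlt.le
      nlinarith [mul_le_mul_of_nonneg_left hsx (mul_nonneg hb.le hφ0),
        mul_le_mul_of_nonneg_right hslope.le hφ0, Real.sqrt_nonneg (φ t)]
    have hφ'le : φ' t ≤ -(a/2) * φ t + c := by linarith
    have hcK : a/2 * K = c := by linarith
    have he : 0 < Real.exp (a/2 * t) := Real.exp_pos _
    show a/2 * Real.exp (a/2 * t) * (φ t - K) + Real.exp (a/2 * t) * φ' t ≤ 0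
    have h9 : Real.exp (a/2 * t) * φ' t ≤ Real.exp (a/2 * t) * (-(a/2) * φ t + c) :=
      mul_le_mul_of_nonneg_left hφ'le he.le
    have h10 : a/2 * Real.exp (a/2 * t) * (φ t - K)
        + Real.exp (a/2 * t) * (-(a/2) * φ t + c)
        = Real.exp (a/2 * t) * (c - a/2 * K) := by ring
    rw [hcK] at h10
    simp at h10
    linarith
  have hfin := myGT_le ht₀₁ hψd hEnull hΨle
  have hψ0 : ψ t₀ < 0 := by
    have hca : c / a < K := by
      have h11 : 0 < c / a := div_pos hc ha
      have h12 : K = 2 * (c / a) := by rw [hKdef]; ring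
      linarith
    have : φ t₀ - K < 0 := by linarith
    exact mul_neg_of_pos_of_neg (Real.exp_pos _) this
  have hψ1 : 0 ≤ ψ t₁ := mul_nonneg (Real.exp_pos _).le (by linarith)
  linarith
end

section
/- Let A be a symmetric positive definite n×n matrix with smallest eigenvalue λ₁ and let z solve (I + α²A)z' + νAz = g(t) with z(0) = 0, where g : [0,T] → ℝⁿ is bounded. Then for all t ∈ [0,T], ⟨Az(t), z(t)⟩^{1/2} ≤ sup_{s∈[0,T]} |A^{-1/2}g(s)| / (αν√d₀), where d₀ = (1/λ₁ + α²)⁻¹. -/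
open Matrix

private lemma dot_hasDerivAt {n : ℕ} {u v : ℝ → Fin n → ℝ} {u' v' : Fin n → ℝ} {t : ℝ}
    (hu : HasDerivAt u u' t) (hv : HasDerivAt v v' t) :
    HasDerivAt (fun s => u s ⬝ᵥ v s) (u' ⬝ᵥ v t + u t ⬝ᵥ v') t := by
  have hui := hasDerivAt_pi.1 hu
  have hvi := hasDerivAt_pi.1 hv
  have h : HasDerivAt (fun s => ∑ i, u s i * v s i)
      (∑ i, (u' i * v t i + u t i * v' i)) t :=
    HasDerivAt.fun_sum fun i _ => (hui i).mul (hvi i)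
  simpa only [dotProduct, Finset.sum_add_distrib] using h

private lemma mulVec_hasDerivAt {n : ℕ} {z : ℝ → Fin n → ℝ} {z' : Fin n → ℝ} {t : ℝ}
    (A : Matrix (Fin n) (Fin n) ℝ) (hz : HasDerivAt z z' t) :
    HasDerivAt (fun s => A *ᵥ z s) (A *ᵥ z') t := by
  have hzi := hasDerivAt_pi.1 hz
  refine hasDerivAt_pi.2 fun i => ?_
  have h : HasDerivAt (fun s => ∑ j, A i j * z s j) (∑ j, A i j * z' j) t :=
    HasDerivAt.fun_sum fun j _ => (hzi j).const_mul (A i j)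
  simpa only [Matrix.mulVec, dotProduct] using h

theorem stmt_16 (n : ℕ) (A : Matrix (Fin n) (Fin n) ℝ)
    (hA : A.IsSymm) (hApos : A.PosDef)
    (lam₁ ν α T : ℝ) (hlam₁ : 0 < lam₁) (hν : 0 < ν) (hα : 0 < α) (hT : 0 < T)
    (hspec : ∀ x : Fin n → ℝ, lam₁ * (x ⬝ᵥ x) ≤ (A *ᵥ x) ⬝ᵥ x)
    (d₀ : ℝ) (hd₀ : d₀ = (1/lam₁ + α^2)⁻¹)
    (g : ℝ → (Fin n → ℝ)) (M : ℝ)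
    (hM : ∀ s ∈ Set.Icc (0:ℝ) T, Real.sqrt ((A⁻¹ *ᵥ g s) ⬝ᵥ g s) ≤ M)
    (z z' : ℝ → (Fin n → ℝ)) (hz0 : z 0 = 0)
    (hderiv : ∀ t ∈ Set.Icc (0:ℝ) T, HasDerivAt z (z' t) t)
    (heq : ∀ t ∈ Set.Icc (0:ℝ) T, z' t + α^2 • (A *ᵥ z' t) + ν • (A *ᵥ z t) = g t) :
    ∀ t ∈ Set.Icc (0:ℝ) T,
      Real.sqrt ((A *ᵥ z t) ⬝ᵥ z t) ≤ M / (α * ν * Real.sqrt d₀) := by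
  have hd₀pos : 0 < d₀ := by rw [hd₀]; positivity
  have hM0 : 0 ≤ M := le_trans (Real.sqrt_nonneg _) (hM 0 ⟨le_refl 0, hT.le⟩)
  have hsym : ∀ u v : Fin n → ℝ, (A *ᵥ u) ⬝ᵥ v = (A *ᵥ v) ⬝ᵥ u := by
    intro u v
    rw [dotProduct_comm, Matrix.dotProduct_mulVec, ← Matrix.mulVec_transpose, hA.eq]
  have hQnn : ∀ w : Fin n → ℝ, 0 ≤ (A *ᵥ w) ⬝ᵥ w := by
    intro w
    refine le_trans ?_ (hspec w)
    have h1 : 0 ≤ w ⬝ᵥ w := Finset.sum_nonneg fun i _ => mul_self_nonneg (w i)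
    positivity
  -- Cauchy-Schwarz for the A-inner product
  have hCS : ∀ x y : Fin n → ℝ,
      ((A *ᵥ x) ⬝ᵥ y)^2 ≤ ((A *ᵥ x) ⬝ᵥ x) * ((A *ᵥ y) ⬝ᵥ y) := by
    intro x y
    by_cases hy : y = 0
    · simp [hy]
    · have hyy : 0 < y ⬝ᵥ y := by
        have h1 : 0 ≤ y ⬝ᵥ y := Finset.sum_nonneg fun i _ => mul_self_nonneg (y i)
        rcases h1.lt_or_eq with h | h
        · exact h
        · exact absurd (dotProduct_self_eq_zero.1 h.symm) hy
      have hc : 0 < (A *ᵥ y) ⬝ᵥ y := lt_of_lt_of_le (by positivity) (hspec y)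
      set a := (A *ᵥ x) ⬝ᵥ x with ha
      set b := (A *ᵥ x) ⬝ᵥ y with hb
      set c := (A *ᵥ y) ⬝ᵥ y with hcdef
      have key : 0 ≤ (A *ᵥ (x + (-(b/c)) • y)) ⬝ᵥ (x + (-(b/c)) • y) := hQnn _
      have expand : (A *ᵥ (x + (-(b/c)) • y)) ⬝ᵥ (x + (-(b/c)) • y)
          = a + 2 * (-(b/c)) * b + (-(b/c))^2 * c := by
        simp only [Matrix.mulVec_add, Matrix.mulVec_smul, add_dotProduct,
          smul_dotProduct, dotProduct_add, dotProduct_smul,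
          smul_eq_mul]
        have h1 : (A *ᵥ y) ⬝ᵥ x = b := hsym y x
        rw [h1, ← ha, ← hb, ← hcdef]
        ring
      rw [expand] at key
      have hrw : a + 2 * (-(b/c)) * b + (-(b/c))^2 * c = a - b^2/c := by
        field_simp
        ring
      rw [hrw] at key
      calc b^2 = (b^2/c) * c := (div_mul_cancel₀ _ hc.ne').symm
        _ ≤ a * c := mul_le_mul_of_nonneg_right (by linarith) hc.le
  -- notation
  set Q : ℝ → ℝ := fun s => (A *ᵥ z s) ⬝ᵥ z s with hQdef
  set E : ℝ → ℝ := fun s => z s ⬝ᵥ z s + α^2 * Q s with hEdef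
  set K : ℝ := M^2 / (ν^2 * d₀) with hKdef
  have hKnn : 0 ≤ K := by rw [hKdef]; positivity
  -- derivative of E
  have hEderiv : ∀ t ∈ Set.Icc (0:ℝ) T,
      HasDerivAt E (2 * (g t ⬝ᵥ z t) - 2 * ν * Q t) t := by
    intro t ht
    have hz := hderiv t ht
    have h1 : HasDerivAt (fun s => z s ⬝ᵥ z s) (z' t ⬝ᵥ z t + z t ⬝ᵥ z' t) t :=
      dot_hasDerivAt hz hz
    have h2 : HasDerivAt (fun s => (A *ᵥ z s) ⬝ᵥ z s)
        ((A *ᵥ z' t) ⬝ᵥ z t + (A *ᵥ z t) ⬝ᵥ z' t) t :=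
      dot_hasDerivAt (mulVec_hasDerivAt A hz) hz
    have hE' : HasDerivAt E
        ((z' t ⬝ᵥ z t + z t ⬝ᵥ z' t) + α^2 * ((A *ᵥ z' t) ⬝ᵥ z t + (A *ᵥ z t) ⬝ᵥ z' t)) t := by
      rw [hEdef]
      exact h1.add (h2.const_mul (α^2))
    have hdot : z' t ⬝ᵥ z t + α^2 * ((A *ᵥ z' t) ⬝ᵥ z t) + ν * Q t = g t ⬝ᵥ z t := by
      have h3 := congrArg (fun w => w ⬝ᵥ z t) (heq t ht)
      simpa only [add_dotProduct, smul_dotProduct, smul_eq_mul, hQdef]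
        using h3
    have hcomm1 : z t ⬝ᵥ z' t = z' t ⬝ᵥ z t := dotProduct_comm _ _
    have hcomm2 : (A *ᵥ z t) ⬝ᵥ z' t = (A *ᵥ z' t) ⬝ᵥ z t := hsym _ _
    have heq2 : (z' t ⬝ᵥ z t + z t ⬝ᵥ z' t)
        + α^2 * ((A *ᵥ z' t) ⬝ᵥ z t + (A *ᵥ z t) ⬝ᵥ z' t)
        = 2 * (g t ⬝ᵥ z t) - 2 * ν * Q t := by
      rw [hcomm1, hcomm2]
      linarith [hdot]
    rwa [heq2] at hE'
  -- pointwise bound on g ⬝ᵥ z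
  have hgz : ∀ t ∈ Set.Icc (0:ℝ) T, g t ⬝ᵥ z t ≤ M * Real.sqrt (Q t) := by
    intro t ht
    have hdet : IsUnit A.det := hApos.det_pos.ne'.isUnit
    have hg : A *ᵥ (A⁻¹ *ᵥ g t) = g t := by
      rw [Matrix.mulVec_mulVec, Matrix.mul_nonsing_inv A hdet, Matrix.one_mulVec]
    have hcs := hCS (A⁻¹ *ᵥ g t) (z t)
    rw [hg] at hcs
    have hc : (A *ᵥ (A⁻¹ *ᵥ g t)) ⬝ᵥ (A⁻¹ *ᵥ g t) = (A⁻¹ *ᵥ g t) ⬝ᵥ g t := by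
      rw [hsym, hg, dotProduct_comm]
    have hcnn : 0 ≤ (A⁻¹ *ᵥ g t) ⬝ᵥ g t := hc ▸ hQnn (A⁻¹ *ᵥ g t)
    rw [dotProduct_comm (g t) (A⁻¹ *ᵥ g t)] at hcs
    have hQt : Q t = (A *ᵥ z t) ⬝ᵥ z t := by rw [hQdef]
    have hsq : |g t ⬝ᵥ z t| ≤ Real.sqrt (((A⁻¹ *ᵥ g t) ⬝ᵥ g t) * Q t) := by
      rw [← Real.sqrt_sq_eq_abs, hQt]
      exact Real.sqrt_le_sqrt hcs
    calc g t ⬝ᵥ z t ≤ |g t ⬝ᵥ z t| := le_abs_self _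
      _ ≤ Real.sqrt (((A⁻¹ *ᵥ g t) ⬝ᵥ g t) * Q t) := hsq
      _ = Real.sqrt ((A⁻¹ *ᵥ g t) ⬝ᵥ g t) * Real.sqrt (Q t) := Real.sqrt_mul hcnn _
      _ ≤ M * Real.sqrt (Q t) :=
          mul_le_mul_of_nonneg_right (hM t ht) (Real.sqrt_nonneg _)
  -- d₀ E ≤ Q
  have hEQ : ∀ t, d₀ * E t ≤ Q t := by
    intro t
    have hQt : 0 ≤ Q t := hQnn (z t)
    have h1 : lam₁ * (z t ⬝ᵥ z t) ≤ Q t := hspec (z t)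
    have hE : E t ≤ (1/lam₁ + α^2) * Q t := by
      have hEt : E t = z t ⬝ᵥ z t + α^2 * Q t := by rw [hEdef]
      rw [hEt]
      have h2 : z t ⬝ᵥ z t ≤ Q t / lam₁ := by
        rw [le_div_iff₀ hlam₁]
        linarith [h1]
      have h3 : Q t / lam₁ = (1/lam₁) * Q t := by ring
      nlinarith [h2]
    calc d₀ * E t ≤ d₀ * ((1/lam₁ + α^2) * Q t) :=
          mul_le_mul_of_nonneg_left hE hd₀pos.le
      _ = Q t := by
          rw [hd₀]
          have hpos : 0 < 1/lam₁ + α^2 := by positivity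
          field_simp
  -- the comparison function
  set F : ℝ → ℝ := fun s => Real.exp (ν * d₀ * s) * (E s - K) with hFdef
  have hFderiv : ∀ t ∈ Set.Icc (0:ℝ) T,
      HasDerivAt F (Real.exp (ν * d₀ * t)
        * (ν * d₀ * (E t - K) + (2 * (g t ⬝ᵥ z t) - 2 * ν * Q t))) t := by
    intro t ht
    have hlin : HasDerivAt (fun s : ℝ => ν * d₀ * s) (ν * d₀) t := by
      simpa using (hasDerivAt_id t).const_mul (ν * d₀)
    have hexp := hlin.exp
    have h := hexp.fun_mul ((hEderiv t ht).sub_const K)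
    rw [hFdef]
    exact h.congr_deriv (by ring)
  have hFderiv_nonpos : ∀ t ∈ Set.Icc (0:ℝ) T,
      Real.exp (ν * d₀ * t)
        * (ν * d₀ * (E t - K) + (2 * (g t ⬝ᵥ z t) - 2 * ν * Q t)) ≤ 0 := by
    intro t ht
    have hQt : 0 ≤ Q t := hQnn (z t)
    have hsq : Real.sqrt (Q t) ^ 2 = Q t := Real.sq_sqrt hQt
    have hyoung : 2 * (g t ⬝ᵥ z t) ≤ M^2 / ν + ν * Q t := by
      have h1 := hgz t ht
      have h2 : 2 * ν * (M * Real.sqrt (Q t)) ≤ M^2 + ν^2 * Q t := by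
        nlinarith [sq_nonneg (M - ν * Real.sqrt (Q t)), hsq]
      have hrhs : M^2 / ν + ν * Q t = (M^2 + ν^2 * Q t) / ν := by
        field_simp
      rw [hrhs, le_div_iff₀ hν]
      nlinarith [h1, h2]
    have hKnu : ν * d₀ * K = M^2 / ν := by
      rw [hKdef]
      field_simp
    have h3 : ν * d₀ * E t ≤ ν * Q t := by
      have := mul_le_mul_of_nonneg_left (hEQ t) hν.le
      linarith [this]
    have inner_nonpos : ν * d₀ * (E t - K) + (2 * (g t ⬝ᵥ z t) - 2 * ν * Q t) ≤ 0 := by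
      nlinarith [hyoung, hKnu, h3]
    exact mul_nonpos_of_nonneg_of_nonpos (Real.exp_pos _).le inner_nonpos
  -- F is antitone on [0, T]
  have hFanti : AntitoneOn F (Set.Icc 0 T) := by
    apply antitoneOn_of_deriv_nonpos (convex_Icc 0 T)
    · intro x hx
      exact ((hFderiv x hx).continuousAt).continuousWithinAt
    · intro x hx
      rw [interior_Icc] at hx
      exact ((hFderiv x ⟨hx.1.le, hx.2.le⟩).differentiableAt).differentiableWithinAt
    · intro x hx
      rw [interior_Icc] at hx
      have hx' : x ∈ Set.Icc (0:ℝ) T := ⟨hx.1.le, hx.2.le⟩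
      rw [(hFderiv x hx').deriv]
      exact hFderiv_nonpos x hx'
  -- conclude E ≤ K on [0, T]
  have hEK : ∀ t ∈ Set.Icc (0:ℝ) T, E t ≤ K := by
    intro t ht
    have h0 : (0:ℝ) ∈ Set.Icc (0:ℝ) T := ⟨le_refl 0, hT.le⟩
    have hmono := hFanti h0 ht ht.1
    have hF0 : F 0 = -K := by
      rw [hFdef]
      simp only [mul_zero, Real.exp_zero, one_mul]
      have hE0 : E 0 = 0 := by
        rw [hEdef]
        simp [hQdef, hz0]
      rw [hE0]
      ring
    rw [hF0] at hmono
    have hFt : F t = Real.exp (ν * d₀ * t) * (E t - K) := by rw [hFdef]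
    rw [hFt] at hmono
    by_contra h
    push_neg at h
    have hpos : 0 < Real.exp (ν * d₀ * t) * (E t - K) :=
      mul_pos (Real.exp_pos _) (by linarith)
    linarith [hKnn]
  -- final estimate
  intro t ht
  have hQt : Q t ≤ M^2 / (α^2 * ν^2 * d₀) := by
    have hzz : 0 ≤ z t ⬝ᵥ z t := Finset.sum_nonneg fun i _ => mul_self_nonneg (z t i)
    have h1 : α^2 * Q t ≤ E t := by
      have hEt : E t = z t ⬝ᵥ z t + α^2 * Q t := by rw [hEdef]
      rw [hEt]
      linarith
    have h2 : α^2 * Q t ≤ M^2 / (ν^2 * d₀) := le_trans h1 (hKdef ▸ hEK t ht)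
    rw [le_div_iff₀ (show (0:ℝ) < α^2 * ν^2 * d₀ by positivity)]
    have h3 : α^2 * Q t * (ν^2 * d₀) ≤ (M^2 / (ν^2 * d₀)) * (ν^2 * d₀) :=
      mul_le_mul_of_nonneg_right h2 (by positivity)
    rw [div_mul_cancel₀ _ (show (ν^2 * d₀) ≠ 0 by positivity)] at h3
    nlinarith [h3]
  have hQnn' : 0 ≤ Q t := hQnn (z t)
  have hden : 0 < α * ν * Real.sqrt d₀ := by
    have := Real.sqrt_pos.2 hd₀pos
    positivity
  have heqn : M^2 / (α^2 * ν^2 * d₀) = (M / (α * ν * Real.sqrt d₀))^2 := by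
    rw [div_pow]
    congr 1
    rw [mul_pow, mul_pow, Real.sq_sqrt hd₀pos.le]
  have hfin : Real.sqrt (Q t) ≤ M / (α * ν * Real.sqrt d₀) := by
    calc Real.sqrt (Q t) ≤ Real.sqrt ((M / (α * ν * Real.sqrt d₀))^2) := by
          apply Real.sqrt_le_sqrt
          rw [← heqn]
          exact hQt
      _ = M / (α * ν * Real.sqrt d₀) := Real.sqrt_sq (by positivity)
  have : Q t = (A *ᵥ z t) ⬝ᵥ z t := by rw [hQdef]
  rwa [this] at hfin
end
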